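/- The orbits of D_{2n} acting on F_p² via θ_{ℓ₁} coincide with the orbits via θ_{ℓ₂} if and only if gcd(n, ℓ₁) = gcd(n, ℓ₂). -/

import Mathlib

/-- The action of the dihedral group `D_{2n}` on `𝔽_p × 𝔽_p` through the
representation `θ_ℓ` (`r^j ↦ diag(ω^{jℓ}, ω^{-jℓ})`, reflections swap the
coordinates up to such a diagonal matrix). -/
def dact {p n : ℕ} (ω : (ZMod p)ˣ) (ℓ : ℕ) :
    DihedralGroup n → ZMod p × ZMod p → ZMod p × ZMod p
  | DihedralGroup.r j, v =>
      (((ω ^ (ℓ * j.val) : (ZMod p)ˣ) : ZMod p) * v.1,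
       ((ω⁻¹ ^ (ℓ * j.val) : (ZMod p)ˣ) : ZMod p) * v.2)
  | DihedralGroup.sr j, v =>
      (((ω ^ (ℓ * j.val) : (ZMod p)ˣ) : ZMod p) * v.2,
       ((ω⁻¹ ^ (ℓ * j.val) : (ZMod p)ˣ) : ZMod p) * v.1)

private lemma solv {n : ℕ} (hn : 0 < n) {ℓ₁ ℓ₂ : ℕ} (h : n.gcd ℓ₁ = n.gcd ℓ₂) (m : ℕ) :
    ∃ k : ℕ, ℓ₂ * k ≡ ℓ₁ * m [MOD n] := by
  obtain ⟨c, hc⟩ : n.gcd ℓ₂ ∣ ℓ₁ := h ▸ Nat.gcd_dvd_right n ℓ₁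
  have hb : (n.gcd ℓ₂ : ℤ) = n * Nat.gcdA n ℓ₂ + ℓ₂ * Nat.gcdB n ℓ₂ := Nat.gcd_eq_gcd_ab n ℓ₂
  set z : ℤ := Nat.gcdB n ℓ₂ * c * m with hz
  have hn' : (n : ℤ) ≠ 0 := by exact_mod_cast hn.ne'
  refine ⟨(z % n).toNat, ?_⟩
  have hk : ((z % n).toNat : ℤ) = z % n := Int.toNat_of_nonneg (Int.emod_nonneg z hn')
  rw [Nat.modEq_iff_dvd]
  push_cast
  rw [hk]
  have h2 : (n:ℤ) ∣ (ℓ₁ * m : ℤ) - ℓ₂ * z := by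
    refine ⟨Nat.gcdA n ℓ₂ * c * m, ?_⟩
    have hc' : (ℓ₁ : ℤ) = (n.gcd ℓ₂ : ℤ) * c := by exact_mod_cast hc
    rw [hz, hc', hb]; ring
  have h3 : (n:ℤ) ∣ ℓ₂ * z - ℓ₂ * (z % n) := by
    refine ⟨ℓ₂ * (z / n), ?_⟩
    rw [Int.emod_def]; ring
  have := dvd_add h2 h3
  rw [show (ℓ₁ : ℤ) * m - ℓ₂ * (z % n) = ℓ₁ * m - ℓ₂ * z + (ℓ₂ * z - ℓ₂ * (z % n)) by ring]
  exact this

private lemma pow_trans {p n : ℕ} (ω : (ZMod p)ˣ) (hω : orderOf ω = n) {a b : ℕ}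
    (hab : a ≡ b [MOD n]) : ω ^ a = ω ^ b := by
  rw [pow_eq_pow_iff_modEq, hω]; exact hab

private lemma orbit_mono {p n : ℕ} (hn : 0 < n) (ω : (ZMod p)ˣ) (hω : orderOf ω = n)
    {ℓ₁ ℓ₂ : ℕ} (h : n.gcd ℓ₁ = n.gcd ℓ₂) (v w : ZMod p × ZMod p)
    (hvw : ∃ g : DihedralGroup n, dact ω ℓ₁ g v = w) :
    ∃ g : DihedralGroup n, dact ω ℓ₂ g v = w := by
  haveI : NeZero n := ⟨hn.ne'⟩
  obtain ⟨g, rfl⟩ := hvw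
  have key : ∀ j : ZMod n, ∃ k : ZMod n,
      ω ^ (ℓ₂ * k.val) = ω ^ (ℓ₁ * j.val) ∧ ω⁻¹ ^ (ℓ₂ * k.val) = ω⁻¹ ^ (ℓ₁ * j.val) := by
    intro j
    obtain ⟨k, hk⟩ := solv hn h j.val
    refine ⟨(k : ZMod n), ?_, ?_⟩
    · refine pow_trans ω hω ?_
      calc ℓ₂ * ((k : ZMod n)).val ≡ ℓ₂ * k [MOD n] :=
            Nat.ModEq.mul_left _ (by rw [ZMod.val_natCast]; exact Nat.mod_modEq k n)
        _ ≡ ℓ₁ * j.val [MOD n] := hk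
    · have : ℓ₂ * ((k : ZMod n)).val ≡ ℓ₁ * j.val [MOD n] := by
        calc ℓ₂ * ((k : ZMod n)).val ≡ ℓ₂ * k [MOD n] :=
              Nat.ModEq.mul_left _ (by rw [ZMod.val_natCast]; exact Nat.mod_modEq k n)
          _ ≡ ℓ₁ * j.val [MOD n] := hk
      rw [inv_pow, inv_pow, pow_trans ω hω this]
  cases g with
  | r j =>
    obtain ⟨k, h1, h2⟩ := key j
    exact ⟨DihedralGroup.r k, by simp only [dact, h1, h2]⟩
  | sr j =>
    obtain ⟨k, h1, h2⟩ := key j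
    exact ⟨DihedralGroup.sr k, by simp only [dact, h1, h2]⟩

private lemma gcd_dvd_gcd_of_solv {n ℓ₁ ℓ₂ : ℕ} (hn : 0 < n)
    (H : ∀ m : ℕ, ∃ k : ℕ, ℓ₁ * m ≡ ℓ₂ * k [MOD n]) : n.gcd ℓ₂ ∣ n.gcd ℓ₁ := by
  have hn' : (n : ℤ) ≠ 0 := by exact_mod_cast hn.ne'
  have hb : (n.gcd ℓ₁ : ℤ) = n * Nat.gcdA n ℓ₁ + ℓ₁ * Nat.gcdB n ℓ₁ := Nat.gcd_eq_gcd_ab n ℓ₁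
  set B : ℤ := Nat.gcdB n ℓ₁ with hB
  set j0 : ℕ := (B % n).toNat with hj0
  have hj0' : (j0 : ℤ) = B % n := Int.toNat_of_nonneg (Int.emod_nonneg B hn')
  obtain ⟨k, hk⟩ := H j0
  suffices hfin : (n.gcd ℓ₂ : ℤ) ∣ (n.gcd ℓ₁ : ℤ) by exact_mod_cast hfin
  have t1 : (n:ℤ) ∣ (ℓ₂ * k : ℤ) - ℓ₁ * j0 := by
    have := (Nat.modEq_iff_dvd).mp hk
    push_cast at this ⊢
    exact this
  have t2 : (n:ℤ) ∣ (ℓ₁ * j0 : ℤ) - ℓ₁ * B := by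
    refine ⟨-(ℓ₁ * (B / n)), ?_⟩
    rw [hj0', Int.emod_def]; ring
  -- n ∣ ℓ₂k - ℓ₁B, and ℓ₁B = d₁ - n*A
  have t3 : (n:ℤ) ∣ (ℓ₂ * k : ℤ) - n.gcd ℓ₁ := by
    have h4 : (ℓ₂ * k : ℤ) - n.gcd ℓ₁ =
        ((ℓ₂ * k : ℤ) - ℓ₁ * j0) + ((ℓ₁ * j0 : ℤ) - ℓ₁ * B) + n * (-(Nat.gcdA n ℓ₁)) := by
      rw [hb]; ring
    rw [h4]
    exact dvd_add (dvd_add t1 t2) ⟨-(Nat.gcdA n ℓ₁), rfl⟩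
  have hd2n : (n.gcd ℓ₂ : ℤ) ∣ (n : ℤ) := by exact_mod_cast Nat.gcd_dvd_left n ℓ₂
  have hd2l : (n.gcd ℓ₂ : ℤ) ∣ (ℓ₂ * k : ℤ) := by
    exact_mod_cast Dvd.dvd.mul_right (Nat.gcd_dvd_right n ℓ₂) k
  have := dvd_sub hd2l (hd2n.trans t3)
  simpa using this

/-- The orbits of `D_{2n}` on `𝔽_p²` via `θ_{ℓ₁}` coincide with those via `θ_{ℓ₂}`
if and only if `gcd(n, ℓ₁) = gcd(n, ℓ₂)`. -/
theorem stmt15 (p : ℕ) [Fact p.Prime] (hp : Odd p) (n : ℕ) (hn : Even n) (hn3 : 3 ≤ n)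
    (ω : (ZMod p)ˣ) (hω : orderOf ω = n)
    (ℓ₁ ℓ₂ : ℕ) (hℓ₁ : 1 ≤ ℓ₁ ∧ ℓ₁ ≤ n / 2 - 1) (hℓ₂ : 1 ≤ ℓ₂ ∧ ℓ₂ ≤ n / 2 - 1) :
    (∀ v w : ZMod p × ZMod p,
        (∃ g : DihedralGroup n, dact ω ℓ₁ g v = w) ↔
        (∃ g : DihedralGroup n, dact ω ℓ₂ g v = w)) ↔
      Nat.gcd n ℓ₁ = Nat.gcd n ℓ₂ := by
  have hn0 : 0 < n := by omega
  haveI : NeZero n := ⟨hn0.ne'⟩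
  constructor
  · intro horb
    have extract : ∀ (a b : ℕ), (∀ v w : ZMod p × ZMod p,
        (∃ g : DihedralGroup n, dact ω a g v = w) → (∃ g : DihedralGroup n, dact ω b g v = w)) →
        ∀ m : ℕ, ∃ k : ℕ, a * m ≡ b * k [MOD n] := by
      intro a b hone m
      obtain ⟨g, hg⟩ := hone (1, 1) (dact ω a (DihedralGroup.r (m : ZMod n)) (1, 1)) ⟨_, rfl⟩
      have hpow : ∀ j : ZMod n, (dact ω b (DihedralGroup.sr j) ((1:ZMod p), (1:ZMod p))).1
          = ((ω ^ (b * j.val) : (ZMod p)ˣ) : ZMod p) * 1 := fun j => rfl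
      have step : ∃ j : ZMod n, ((ω ^ (b * j.val) : (ZMod p)ˣ) : ZMod p)
          = ((ω ^ (a * (m : ZMod n).val) : (ZMod p)ˣ) : ZMod p) := by
        cases g with
        | r j =>
          refine ⟨j, ?_⟩
          have := congrArg Prod.fst hg
          simpa [dact] using this
        | sr j =>
          refine ⟨j, ?_⟩
          have := congrArg Prod.fst hg
          simpa [dact] using this
      obtain ⟨j, hj⟩ := step
      have hu : ω ^ (b * j.val) = ω ^ (a * (m : ZMod n).val) := Units.ext hj
      have hmod : b * j.val ≡ a * (m : ZMod n).val [MOD n] := by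
        rwa [pow_eq_pow_iff_modEq, hω] at hu
      refine ⟨j.val, ?_⟩
      calc a * m ≡ a * (m : ZMod n).val [MOD n] :=
            (Nat.ModEq.mul_left _ (by rw [ZMod.val_natCast]; exact (Nat.mod_modEq m n).symm))
        _ ≡ b * j.val [MOD n] := hmod.symm
    have H12 := extract ℓ₁ ℓ₂ (fun v w => (horb v w).mp)
    have H21 := extract ℓ₂ ℓ₁ (fun v w => (horb v w).mpr)
    exact Nat.dvd_antisymm (gcd_dvd_gcd_of_solv hn0 H21) (gcd_dvd_gcd_of_solv hn0 H12)
  · intro h v w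
    exact ⟨orbit_mono hn0 ω hω h v w, orbit_mono hn0 ω hω h.symm v w⟩
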